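/- Define λᵢ = (1 + Σ_{m=1}^{i} a_{τ_m}²)/(Σ_{m=1}^{i} b_{τ_m}) where bⱼ = aⱼcⱼ. If λᵢ < φ_{τ_{i+1}}⁻¹ then λ_{i+1} < φ_{τ_{i+2}}⁻¹; that is, once the threshold condition holds at index i it holds for all larger indices. -/

import Mathlib

/-- With `λᵢ = (1 + Σ_{m=1}^{i} a_{τ_m}²)/(Σ_{m=1}^{i} b_{τ_m})`,
`bⱼ = aⱼcⱼ`, if `λᵢ < φ_{τ_{i+1}}⁻¹` then `λ_{i+1} < φ_{τ_{i+2}}⁻¹`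
(the case `i+2 = R+1` is vacuous by the convention `φ_{τ_{R+1}}⁻¹ = ∞`,
encoded here by quantifying over the proof that `τ_{i+2}` exists;
0-based indexing: `τ m` is the paper's `τ_{m+1}`). -/
theorem stmt_7 (R : ℕ) (hR : 1 ≤ R) (a c : Fin R → ℝ)
    (ha : ∀ j, 0 < a j) (hc : ∀ j, 0 < c j) (τ : Equiv.Perm (Fin R))
    (hord : ∀ i j : Fin R, i ≤ j → c (τ j) / a (τ j) ≤ c (τ i) / a (τ i))
    (lam : ℕ → ℝ)
    (hlam : ∀ i : ℕ, lam i =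
      (1 + ∑ m ∈ Finset.univ.filter (fun m : Fin R => (m : ℕ) < i), (a (τ m)) ^ 2) /
        (∑ m ∈ Finset.univ.filter (fun m : Fin R => (m : ℕ) < i), a (τ m) * c (τ m)))
    (i : ℕ) (hi1 : 1 ≤ i) (hiR : i < R)
    (hcond : lam i < (c (τ ⟨i, hiR⟩) / a (τ ⟨i, hiR⟩))⁻¹) :
    ∀ h2 : i + 1 < R, lam (i + 1) < (c (τ ⟨i + 1, h2⟩) / a (τ ⟨i + 1, h2⟩))⁻¹ := by
  intro h2
  set j : Fin R := ⟨i, hiR⟩ with hj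
  set j' : Fin R := ⟨i + 1, h2⟩ with hj'
  set S := ∑ m ∈ Finset.univ.filter (fun m : Fin R => (m : ℕ) < i), (a (τ m)) ^ 2 with hS
  set T := ∑ m ∈ Finset.univ.filter (fun m : Fin R => (m : ℕ) < i), a (τ m) * c (τ m) with hT
  have hψpos : 0 < c (τ j) / a (τ j) := div_pos (hc _) (ha _)
  have hψ'pos : 0 < c (τ j') / a (τ j') := div_pos (hc _) (ha _)
  have hsplit : Finset.univ.filter (fun m : Fin R => (m : ℕ) < i + 1)
      = insert j (Finset.univ.filter (fun m : Fin R => (m : ℕ) < i)) := by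
    ext m
    simp only [Finset.mem_filter, Finset.mem_insert, Finset.mem_univ, true_and]
    constructor
    · intro hm
      rcases Nat.lt_succ_iff_lt_or_eq.mp hm with h | h
      · exact Or.inr h
      · exact Or.inl (Fin.ext h)
    · rintro (rfl | hm)
      · exact Nat.lt_succ_self _
      · exact Nat.lt_succ_of_lt hm
  have hjnot : j ∉ Finset.univ.filter (fun m : Fin R => (m : ℕ) < i) := by
    simp [hj]
  have hTpos : 0 < T := by
    apply Finset.sum_pos
    · intro m _
      exact mul_pos (ha _) (hc _)
    · exact ⟨⟨0, lt_of_lt_of_le hi1 hiR.le⟩, by simpa using (show 0 < i from hi1)⟩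
  have hT'pos : 0 < a (τ j) * c (τ j) + T :=
    add_pos (mul_pos (ha _) (hc _)) hTpos
  have hnum : 1 + S < (c (τ j) / a (τ j))⁻¹ * T := by
    rw [hlam i, ← hS, ← hT, div_lt_iff₀ hTpos] at hcond
    exact hcond
  have hψle : (c (τ j) / a (τ j))⁻¹ ≤ (c (τ j') / a (τ j'))⁻¹ := by
    apply inv_anti₀ hψ'pos
    exact hord j j' (by simp [hj, hj', Fin.le_def])
  have hkey : a (τ j) ^ 2 = (c (τ j) / a (τ j))⁻¹ * (a (τ j) * c (τ j)) := by
    rw [inv_div, div_mul_eq_mul_div, eq_div_iff (hc (τ j)).ne']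
    ring
  rw [hlam (i + 1), hsplit, Finset.sum_insert hjnot, Finset.sum_insert hjnot,
    ← hS, ← hT, div_lt_iff₀ hT'pos]
  calc 1 + (a (τ j) ^ 2 + S)
      = (1 + S) + a (τ j) ^ 2 := by ring
    _ < (c (τ j) / a (τ j))⁻¹ * T + (c (τ j) / a (τ j))⁻¹ * (a (τ j) * c (τ j)) := by
        rw [← hkey]; linarith
    _ = (c (τ j) / a (τ j))⁻¹ * (a (τ j) * c (τ j) + T) := by ring
    _ ≤ (c (τ j') / a (τ j'))⁻¹ * (a (τ j) * c (τ j) + T) :=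
        mul_le_mul_of_nonneg_right hψle (by linarith)
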